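/- For every y ≥ y₀ there exists a unique z_y ∈ (y,∞) such that η(z_y, y) = 0; moreover η(z,y) > 0 for all z ∈ (y, z_y) and η(z,y) < 0 for all z > z_y. -/

import Mathlib

open Set Filter

/-- for every `y ≥ y₀` there is a unique `z_y ∈ (y,∞)` with `η(z_y,y) = 0`;
moreover `η(z,y) > 0` on `(y, z_y)` and `η(z,y) < 0` on `(z_y, ∞)`. -/
theorem stmt_1
    (y₀ : ℝ) (hy₀ : 0 < y₀)
    (G R G' R' : ℝ → ℝ)
    (hGdiff : ∀ z ∈ Ioi (0 : ℝ), HasDerivAt G (G' z) z)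
    (hGconc : ConcaveOn ℝ (Ioi (0 : ℝ)) G)
    (hGpos : ∀ z ∈ Ioi (0 : ℝ), 0 < G z)
    (hGlim : Tendsto (fun z => G z / z) atTop (nhds 0))
    (hRdiff : ∀ y ∈ Ici y₀, HasDerivAt R (R' y) y)
    (hR'pos : ∀ y ∈ Ici y₀, 0 < R' y)
    (hGR : ∀ y ∈ Ici y₀, R y < G y)
    (η : ℝ → ℝ → ℝ)
    (hη : ∀ z y, η z y = (G z - R y) / (z - y) - R' y) :
    ∀ y ∈ Ici y₀, ∃ zy : ℝ, y < zy ∧ η zy y = 0 ∧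
      (∀ z ∈ Ioo y zy, 0 < η z y) ∧
      (∀ z, zy < z → η z y < 0) ∧
      (∀ z', y < z' → η z' y = 0 → z' = zy) := by
  intro y hy
  have hy0 : (0:ℝ) < y := lt_of_lt_of_le hy₀ hy
  set c : ℝ := R' y with hc
  have hcpos : 0 < c := hR'pos y hy
  set h : ℝ → ℝ := fun z => G z - R y - c * (z - y) with hh
  -- concavity inequality for h
  have hconc : ∀ a ∈ Ioi (0:ℝ), ∀ b ∈ Ioi (0:ℝ), ∀ t s : ℝ, 0 ≤ t → 0 ≤ s → t + s = 1 →
      t * h a + s * h b ≤ h (t * a + s * b) := by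
    intro a ha b hb t s ht hs hts
    have hG := hGconc.2 ha hb ht hs hts
    simp only [smul_eq_mul] at hG
    simp only [hh]
    have hkey : t * (G a - R y - c * (a - y)) + s * (G b - R y - c * (b - y))
        = t * G a + s * G b - R y - c * (t * a + s * b - y) := by
      linear_combination (c * y - R y) * hts
    rw [hkey]
    linarith
  have hhy : 0 < h y := by
    have := hGR y hy
    simp only [hh, sub_self, mul_zero]
    linarith
  -- h z / z tends to -c
  have htend : Tendsto (fun z => h z / z) atTop (nhds (-c)) := by
    have h1 : Tendsto (fun z : ℝ => G z / z - R y * z⁻¹ - (c - c * y * z⁻¹)) atTop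
        (nhds (0 - R y * 0 - (c - c * y * 0))) := by
      exact (hGlim.sub (tendsto_inv_atTop_zero.const_mul _)).sub
        (tendsto_const_nhds.sub (tendsto_inv_atTop_zero.const_mul _))
    have h2 : (0 : ℝ) - R y * 0 - (c - c * y * 0) = -c := by ring
    rw [h2] at h1
    refine h1.congr' ?_
    filter_upwards [eventually_gt_atTop (0:ℝ)] with z hz
    have hz' : z ≠ 0 := ne_of_gt hz
    simp only [hh]
    field_simp
  -- find b > y with h b < 0
  obtain ⟨b, hbneg, hby⟩ :
      ∃ b : ℝ, h b / b < 0 ∧ y < b := by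
    have hev : ∀ᶠ z in atTop, h z / z < 0 :=
      htend.eventually_lt_const (by linarith : -c < 0)
    exact ((hev.and (eventually_gt_atTop y)).exists)
  have hb0 : (0:ℝ) < b := lt_trans hy0 hby
  have hbneg' : h b < 0 := by
    have := mul_neg_of_neg_of_pos hbneg hb0
    rwa [div_mul_cancel₀ _ (ne_of_gt hb0)] at this
  -- continuity of h on [y,b]
  have hcont : ContinuousOn h (Icc y b) := by
    intro z hz
    have hz0 : (0:ℝ) < z := lt_of_lt_of_le hy0 hz.1
    exact (((hGdiff z hz0).continuousAt.continuousWithinAt.sub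
      continuousWithinAt_const).sub
      ((continuous_const.mul (continuous_id.sub continuous_const)).continuousWithinAt))
  -- IVT: zero of h in (y, b)
  obtain ⟨zy, hzyIoo, hzy0⟩ : ∃ zy ∈ Ioo y b, h zy = 0 := by
    have := intermediate_value_Ioo' (le_of_lt hby) hcont
    have h0mem : (0:ℝ) ∈ Ioo (h b) (h y) := ⟨hbneg', hhy⟩
    obtain ⟨zy, hzy, hzy0⟩ := this h0mem
    exact ⟨zy, hzy, hzy0⟩
  have hyzy : y < zy := hzyIoo.1
  have hzy0' : (0:ℝ) < zy := lt_trans hy0 hyzy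
  -- relation between η and h
  have hηh : ∀ z : ℝ, y < z → η z y = h z / (z - y) := by
    intro z hz
    have hne : z - y ≠ 0 := sub_ne_zero.mpr (ne_of_gt hz)
    rw [hη]
    simp only [hh]
    field_simp
    rw [hc]
  -- sign of h on (y, zy)
  have hpos : ∀ z ∈ Ioo y zy, 0 < h z := by
    intro z hz
    set t : ℝ := (zy - z) / (zy - y) with htdef
    set s : ℝ := (z - y) / (zy - y) with hsdef
    have hd : (0:ℝ) < zy - y := sub_pos.mpr hyzy
    have ht : 0 < t := div_pos (sub_pos.mpr hz.2) hd
    have hs : 0 < s := div_pos (sub_pos.mpr hz.1) hd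
    have hts : t + s = 1 := by
      rw [htdef, hsdef, ← add_div, div_eq_one_iff_eq hd.ne']
      ring
    have hcomb : t * y + s * zy = z := by
      rw [htdef, hsdef, div_mul_eq_mul_div, div_mul_eq_mul_div, ← add_div, div_eq_iff hd.ne']
      ring
    have := hconc y hy0 zy hzy0' t s ht.le hs.le hts
    rw [hcomb, hzy0] at this
    nlinarith
  -- sign of h on (zy, ∞)
  have hneg : ∀ z : ℝ, zy < z → h z < 0 := by
    intro z hz
    have hz0 : (0:ℝ) < z := lt_trans hzy0' hz
    set t : ℝ := (z - zy) / (z - y) with htdef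
    set s : ℝ := (zy - y) / (z - y) with hsdef
    have hd : (0:ℝ) < z - y := sub_pos.mpr (lt_trans hyzy hz)
    have ht : 0 < t := div_pos (sub_pos.mpr hz) hd
    have hs : 0 < s := div_pos (sub_pos.mpr hyzy) hd
    have hts : t + s = 1 := by
      rw [htdef, hsdef, ← add_div, div_eq_one_iff_eq hd.ne']
      ring
    have hcomb : t * y + s * z = zy := by
      rw [htdef, hsdef, div_mul_eq_mul_div, div_mul_eq_mul_div, ← add_div, div_eq_iff hd.ne']
      ring
    have := hconc y hy0 z hz0 t s ht.le hs.le hts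
    rw [hcomb, hzy0] at this
    nlinarith
  refine ⟨zy, hyzy, ?_, ?_, ?_, ?_⟩
  · rw [hηh zy hyzy, hzy0, zero_div]
  · intro z hz
    rw [hηh z hz.1]
    exact div_pos (hpos z hz) (sub_pos.mpr hz.1)
  · intro z hz
    have hyz : y < z := lt_trans hyzy hz
    rw [hηh z hyz]
    exact div_neg_of_neg_of_pos (hneg z hz) (sub_pos.mpr hyz)
  · intro z' hz' hη0
    have hh' : h z' = 0 := by
      have := hηh z' hz'
      rw [hη0] at this
      have hne : z' - y ≠ 0 := sub_ne_zero.mpr (ne_of_gt hz')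
      field_simp at this
      linarith [this]
    rcases lt_trichotomy z' zy with hlt | heq | hgt
    · exact absurd hh' (ne_of_gt (hpos z' ⟨hz', hlt⟩))
    · exact heq
    · exact absurd hh' (ne_of_lt (hneg z' hgt))
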